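/- The planar map δ(y₁,y₂) = (y₂, −(a²y₁ − 2a²y₂ + y₁y₂²)/(a² − 2y₁y₂ + y₂²)) preserves the function R(y₁,y₂) = (a² − y₁y₂)/(y₁ − y₂), i.e. R(δ(y)) = R(y) whenever y₁ ≠ y₂, a² − 2y₁y₂ + y₂² ≠ 0, and the denominator of R(δ(y)) is nonzero. -/

import Mathlib

/-- The planar map `δ(y₁,y₂) = (y₂, -(a²y₁-2a²y₂+y₁y₂²)/(a²-2y₁y₂+y₂²))`
preserves `R(y₁,y₂) = (a²-y₁y₂)/(y₁-y₂)`. -/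
theorem h1_planar_delta_invariant {K : Type*} [Field K]
    (a y₁ y₂ : K) (h12 : y₁ ≠ y₂)
    (hden : a^2 - 2*y₁*y₂ + y₂^2 ≠ 0)
    (hden' : y₂ - (-(a^2*y₁ - 2*a^2*y₂ + y₁*y₂^2)/(a^2 - 2*y₁*y₂ + y₂^2)) ≠ 0) :
    let R : K → K → K := fun u v => (a^2 - u*v)/(u - v)
    R y₂ (-(a^2*y₁ - 2*a^2*y₂ + y₁*y₂^2)/(a^2 - 2*y₁*y₂ + y₂^2)) = R y₁ y₂ := by
  intro R
  have h12' : y₁ - y₂ ≠ 0 := sub_ne_zero.mpr h12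
  simp only [R]
  rw [div_eq_div_iff hden' h12']
  have hz := div_mul_cancel₀ (-(a^2*y₁ - 2*a^2*y₂ + y₁*y₂^2)) hden
  linear_combination hz
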